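/- Let G be a group with an index-2 subgroup H, and let V be a finite-dimensional representation of H over a field of characteristic zero. Then there is a natural isomorphism of G-representations ad(TensorInd_H^G V) ≅ 𝟙 ⊕ Ind_H^G ad⁰(V) ⊕ TensorInd_H^G ad⁰(V), where TensorInd denotes tensor induction, ad(W) = End(W) and ad⁰(W) denotes trace-zero endomorphisms. In particular, if V has dimension > 1 (so ad⁰(V) ≠ 0), the image of G acting on ad(TensorInd_H^G V) surjects onto G/H, and hence any group acting on ad of a tensor-induced representation has nontrivial component-style quotient of order 2. -/

import Mathlib

open TensorProduct


private lemma tcommcomm {R M : Type*} [CommRing R] [AddCommGroup M] [Module R M]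
    (x : M ⊗[R] M) : (TensorProduct.comm R M M) ((TensorProduct.comm R M M) x) = x := by
  induction x using TensorProduct.induction_on with
  | zero => simp
  | tmul v w => simp
  | add x y hx hy => simp [hx, hy]

private lemma tswap {R M : Type*} [CommRing R] [AddCommGroup M] [Module R M]
    (a a' f g : M →ₗ[R] M) (x : M ⊗[R] M) :
    TensorProduct.map a LinearMap.id ((TensorProduct.comm R M M)
      (TensorProduct.map f g ((TensorProduct.comm R M M)
        (TensorProduct.map a' LinearMap.id x)))) =
      TensorProduct.map (a ∘ₗ g ∘ₗ a') f x := by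
  induction x using TensorProduct.induction_on with
  | zero => simp
  | tmul v w => simp
  | add x y hx hy => simp [hx, hy]

private lemma tmap3 {R M : Type*} [CommRing R] [AddCommGroup M] [Module R M]
    (a b a' b' f g : M →ₗ[R] M) (x : M ⊗[R] M) :
    TensorProduct.map a b (TensorProduct.map f g (TensorProduct.map a' b' x)) =
      TensorProduct.map (a ∘ₗ f ∘ₗ a') (b ∘ₗ g ∘ₗ b') x := by
  induction x using TensorProduct.induction_on with
  | zero => simp
  | tmul v w => simp
  | add x y hx hy => simp [hx, hy]


set_option maxHeartbeats 1600000 in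
set_option synthInstance.maxHeartbeats 400000 in
theorem stmt_17
    {k G V U : Type*} [Field k] [CharZero k] [Group G]
    (H : Subgroup G) (hH : H.index = 2)
    [AddCommGroup V] [Module k V] [FiniteDimensional k V]
    [AddCommGroup U] [Module k U] [FiniteDimensional k U]
    (ρV : Representation k ↥H V)
    (ρW : Representation k G U)
    (σ : G) (hσ : σ ∉ H) (hσ2 : σ ^ 2 ∈ H)
    (T : U ≃ₗ[k] V ⊗[k] V)
    (hT1 : ∀ (h : G) (hh : h ∈ H) (u : U),
      T (ρW h u) = TensorProduct.map (ρV ⟨h, hh⟩)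
        (ρV ⟨σ⁻¹ * h * σ, by
          simp only [Subgroup.mul_mem_iff_of_index_two hH, Subgroup.inv_mem_iff]
          tauto⟩) (T u))
    (hT2 : ∀ v w : V, T (ρW σ (T.symm (v ⊗ₜ[k] w))) = (ρV ⟨σ ^ 2, hσ2⟩ w) ⊗ₜ[k] v) :
    ∃ E : Fin 3 → Submodule k (Module.End k U),
      -- internal direct sum decomposition of `ad(W) = End(W)`
      iSupIndep E ∧ (⨆ i, E i) = ⊤ ∧
      -- each summand is `G`-invariant for the conjugation action
      (∀ i (g : G), ∀ f ∈ E i, (ρW g) ∘ₗ f ∘ₗ (ρW g⁻¹) ∈ E i) ∧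
      -- `E 0` is the trivial representation `𝟙`, spanned by the identity
      E 0 = Submodule.span k {(LinearMap.id : Module.End k U)} ∧
      (∀ g : G, ∀ f ∈ E 0, (ρW g) ∘ₗ f ∘ₗ (ρW g⁻¹) = f) ∧
      -- `E 1 ≅ Ind_H^G ad⁰(V)`: it is the direct sum of an `H`-invariant subspace `A`
      -- (H-isomorphic to `ad⁰(V)`) and its translate `B`, swapped by any `g ∉ H`
      (∃ A B : Submodule k (Module.End k U), A ⊔ B = E 1 ∧ A ⊓ B = ⊥ ∧
        (∃ hA : ∀ (h : G), h ∈ H → ∀ f ∈ A, (ρW h) ∘ₗ f ∘ₗ (ρW h⁻¹) ∈ A,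
          (∀ (h : G), h ∈ H → ∀ f ∈ B, (ρW h) ∘ₗ f ∘ₗ (ρW h⁻¹) ∈ B) ∧
          (∀ g ∉ H, ∀ f ∈ A, (ρW g) ∘ₗ f ∘ₗ (ρW g⁻¹) ∈ B) ∧
          (∀ g ∉ H, ∀ f ∈ B, (ρW g) ∘ₗ f ∘ₗ (ρW g⁻¹) ∈ A) ∧
          -- `A` is `H`-isomorphic to `ad⁰(V)`, the trace-zero endomorphisms of `V`
          ∃ e : ↥A ≃ₗ[k] ↥(LinearMap.ker (LinearMap.trace k V)),
            ∀ (h : G) (hh : h ∈ H) (f : Module.End k U) (hf : f ∈ A),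
              ((e ⟨(ρW h) ∘ₗ f ∘ₗ (ρW h⁻¹), hA h hh f hf⟩ : Module.End k V)) =
                (ρV ⟨h, hh⟩) ∘ₗ ((e ⟨f, hf⟩ : Module.End k V)) ∘ₗ (ρV ⟨h, hh⟩⁻¹))) ∧
      -- dimensions: `dim E 1 = 2(n²-1)` and `dim E 2 = (n²-1)²` with `n = dim V`
      Module.finrank k (E 1) = 2 * (Module.finrank k V ^ 2 - 1) ∧
      Module.finrank k (E 2) = (Module.finrank k V ^ 2 - 1) ^ 2 ∧
      -- in particular the image of `G` on `ad(W)` surjects onto `G/H`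
      (1 < Module.finrank k V →
        ∀ g ∉ H, ∃ f : Module.End k U, (ρW g) ∘ₗ f ∘ₗ (ρW g⁻¹) ≠ f) := by
  classical
  set Ψ : (Module.End k V) ⊗[k] (Module.End k V) ≃ₗ[k] Module.End k U :=
    (homTensorHomEquiv k V V V V).trans T.symm.conj with hΨdef
  have hmemc : ∀ {h : G}, h ∈ H → σ⁻¹ * h * σ ∈ H := by
    intro h hh
    simp only [Subgroup.mul_mem_iff_of_index_two hH, Subgroup.inv_mem_iff]
    tauto
  have hΨap : ∀ (f g : Module.End k V) (u : U),
      T ((Ψ (f ⊗ₜ g)) u) = TensorProduct.map f g (T u) := by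
    intro f g u
    simp [hΨdef, LinearEquiv.conj_apply, homTensorHomEquiv_apply]
  have hcancel : ∀ (g : G) (u : U), (ρW g) ((ρW g⁻¹) u) = u := by
    intro g u
    have h1 : (ρW g) * (ρW g⁻¹) = 1 := by rw [← map_mul, mul_inv_cancel, map_one]
    calc (ρW g) ((ρW g⁻¹) u) = ((ρW g) * (ρW g⁻¹)) u := rfl
      _ = u := by rw [h1]; rfl
  have hcancel' : ∀ (g : G) (u : U), (ρW g⁻¹) ((ρW g) u) = u := by
    intro g u; simpa using hcancel g⁻¹ u
  have hKh : ∀ (h : G) (hh : h ∈ H) (f g : Module.End k V),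
      (ρW h) ∘ₗ (Ψ (f ⊗ₜ g)) ∘ₗ (ρW h⁻¹) =
        Ψ (((ρV ⟨h, hh⟩) ∘ₗ f ∘ₗ (ρV (⟨h, hh⟩⁻¹))) ⊗ₜ
            ((ρV ⟨σ⁻¹ * h * σ, hmemc hh⟩) ∘ₗ g ∘ₗ (ρV (⟨σ⁻¹ * h * σ, hmemc hh⟩⁻¹)))) := by
    intro h hh f g
    apply LinearMap.ext; intro u
    apply T.injective
    simp only [LinearMap.comp_apply]
    have h2 : T ((ρW h⁻¹) u) = TensorProduct.map (ρV (⟨h, hh⟩⁻¹))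
        (ρV (⟨σ⁻¹ * h * σ, hmemc hh⟩⁻¹)) (T u) := by
      have := hT1 h⁻¹ (inv_mem hh) u
      convert this using 3
      all_goals exact congrArg ρV (by ext; simp [mul_assoc])
    rw [hT1 h hh, hΨap, h2, hΨap, tmap3]
  have hKσ : ∀ (f g : Module.End k V),
      (ρW σ) ∘ₗ (Ψ (f ⊗ₜ g)) ∘ₗ (ρW σ⁻¹) =
        Ψ (((ρV ⟨σ^2, hσ2⟩) ∘ₗ g ∘ₗ (ρV (⟨σ^2, hσ2⟩⁻¹))) ⊗ₜ f) := by
    have hSop : ∀ x : V ⊗[k] V, T (ρW σ (T.symm x)) =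
        TensorProduct.map (ρV ⟨σ^2, hσ2⟩) LinearMap.id ((TensorProduct.comm k V V) x) := by
      intro x
      induction x using TensorProduct.induction_on with
      | zero => simp
      | tmul v w => simpa using hT2 v w
      | add x y hx hy => simp [hx, hy]
    have hvc : ∀ (x : ↥H) (v : V), (ρV x) ((ρV x⁻¹) v) = v := by
      intro x v
      have h1 : (ρV x) * (ρV x⁻¹) = 1 := by rw [← map_mul, mul_inv_cancel, map_one]
      calc (ρV x) ((ρV x⁻¹) v) = ((ρV x) * (ρV x⁻¹)) v := rfl
        _ = v := by rw [h1]; rfl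
    have hSopInv : ∀ x : V ⊗[k] V, T (ρW σ⁻¹ (T.symm x)) =
        (TensorProduct.comm k V V)
          (TensorProduct.map (ρV (⟨σ^2, hσ2⟩⁻¹)) LinearMap.id x) := by
      intro x
      have hinj : Function.Injective (fun y : V ⊗[k] V => T (ρW σ (T.symm y))) := by
        have : Function.LeftInverse (fun z : V ⊗[k] V => T (ρW σ⁻¹ (T.symm z)))
            (fun y : V ⊗[k] V => T (ρW σ (T.symm y))) := by
          intro y; simp [hcancel']
        exact this.injective
      apply hinj
      simp only
      rw [LinearEquiv.symm_apply_apply, hcancel, hSop, tcommcomm]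
      have : ∀ z : V ⊗[k] V, TensorProduct.map (ρV ⟨σ^2, hσ2⟩) LinearMap.id
          (TensorProduct.map (ρV (⟨σ^2, hσ2⟩⁻¹)) LinearMap.id z) = z := by
        intro z
        induction z using TensorProduct.induction_on with
        | zero => simp
        | tmul v w => simp [hvc]
        | add a b ha hb => simp [ha, hb]
      rw [this, LinearEquiv.apply_symm_apply]
    intro f g
    apply LinearMap.ext; intro u
    apply T.injective
    simp only [LinearMap.comp_apply]
    have h2 : T ((ρW σ⁻¹) u) = (TensorProduct.comm k V V)
        (TensorProduct.map (ρV (⟨σ^2, hσ2⟩⁻¹)) LinearMap.id (T u)) := by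
      simpa using hSopInv (T u)
    have h3 : T ((ρW σ) ((Ψ (f ⊗ₜ g)) ((ρW σ⁻¹) u))) =
        TensorProduct.map (ρV ⟨σ^2, hσ2⟩) LinearMap.id ((TensorProduct.comm k V V)
          (T ((Ψ (f ⊗ₜ g)) ((ρW σ⁻¹) u)))) := by
      simpa using hSop (T ((Ψ (f ⊗ₜ g)) ((ρW σ⁻¹) u)))
    rw [h3, hΨap, h2, hΨap, tswap]
  -- ==== stage 2 ====
  by_cases hV0 : Module.finrank k V = 0
  ·
    have hVsub : Subsingleton V := Module.finrank_zero_iff.mp hV0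
    have hVVsub : Subsingleton (V ⊗[k] V) := by
      have : Module.finrank k (V ⊗[k] V) = 0 := by
        rw [Module.finrank_tensorProduct, hV0, mul_zero]
      exact Module.finrank_zero_iff.mp this
    have hUsub : Subsingleton U := T.toEquiv.subsingleton
    have hEU : Subsingleton (Module.End k U) :=
      ⟨fun f g => LinearMap.ext fun x => Subsingleton.elim _ _⟩
    have hEV : Subsingleton (Module.End k V) :=
      ⟨fun f g => LinearMap.ext fun x => Subsingleton.elim _ _⟩
    have hbotmem : ∀ x : Module.End k U, x ∈ (⊥ : Submodule k (Module.End k U)) := by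
      intro x; rw [Submodule.mem_bot]; exact Subsingleton.elim _ _
    refine ⟨fun _ => ⊥, fun i => disjoint_bot_left, ?_, ?_, ?_, ?_, ?_, ?_, ?_, ?_⟩
    · rw [eq_top_iff]; intro x _; exact Submodule.mem_iSup_of_mem 0 (hbotmem x)
    · intro i g f _; exact hbotmem _
    · refine le_antisymm bot_le ?_
      rw [Submodule.span_le]; intro x _; exact hbotmem x
    · intro g f _; exact Subsingleton.elim _ _
    · haveI : Subsingleton ↥(⊥ : Submodule k (Module.End k U)) := inferInstance
      haveI : Subsingleton ↥(LinearMap.ker (LinearMap.trace k V)) :=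
        ⟨fun a b => Subtype.ext (Subsingleton.elim _ _)⟩
      exact ⟨⊥, ⊥, by simp, by simp, ⟨fun _ _ f _ => hbotmem _, fun _ _ f _ => hbotmem _,
        fun _ _ f _ => hbotmem _, fun _ _ f _ => hbotmem _,
        LinearEquiv.ofSubsingleton _ _, fun h hh f hf => Subsingleton.elim _ _⟩⟩
    · simp [hV0]
    · simp [hV0]
    · intro h; omega
  have hnk : ((Module.finrank k V : k)) ≠ 0 := Nat.cast_ne_zero.mpr hV0
  set S : Submodule k (Module.End k V) := LinearMap.ker (LinearMap.trace k V) with hSdef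
  set π : Module.End k V →ₗ[k] Module.End k V :=
    ((Module.finrank k V : k))⁻¹ • ((LinearMap.trace k V).smulRight (1 : Module.End k V))
    with hπdef
  set π' : Module.End k V →ₗ[k] Module.End k V := LinearMap.id - π with hπ'def
  have hπapp : ∀ f, π f =
      (((Module.finrank k V : k))⁻¹ * LinearMap.trace k V f) • (1 : Module.End k V) := by
    intro f; simp [hπdef, smul_smul]
  have hπ'app : ∀ f, π' f = f - π f := by intro f; simp [hπ'def]
  have hπ1 : π (1 : Module.End k V) = 1 := by
    rw [hπapp, LinearMap.trace_one, inv_mul_cancel₀ hnk, one_smul]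
  have hπ'1 : π' (1 : Module.End k V) = 0 := by rw [hπ'app, hπ1, sub_self]
  have hπS : ∀ x ∈ S, π x = 0 := by
    intro x hx
    rw [hSdef, LinearMap.mem_ker] at hx
    rw [hπapp, hx, mul_zero, zero_smul]
  have hπ'S : ∀ x ∈ S, π' x = x := by
    intro x hx; rw [hπ'app, hπS x hx, sub_zero]
  have hπ'mem : ∀ x, π' x ∈ S := by
    intro x
    rw [hSdef, LinearMap.mem_ker, hπ'app, map_sub, hπapp, map_smul,
      LinearMap.trace_one, smul_eq_mul]
    field_simp
    simp
  have hππ : ∀ x, π (π x) = π x := by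
    intro x; rw [hπapp x, map_smul, hπ1]
  have hππ' : ∀ x, π (π' x) = 0 := fun x => hπS _ (hπ'mem x)
  have hπ'π : ∀ x, π' (π x) = 0 := by
    intro x; rw [hπ'app, hππ, sub_self]
  have hπ'π' : ∀ x, π' (π' x) = π' x := by
    intro x; rw [hπ'app (π' x), hππ', sub_zero]
  have hsum : ∀ x, π x + π' x = x := by intro x; rw [hπ'app]; abel
  -- submodules on the tensor side
  set F0 : Submodule k (Module.End k V ⊗[k] Module.End k V) :=
    Submodule.span k {(1 : Module.End k V) ⊗ₜ[k] (1 : Module.End k V)} with hF0def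
  set FA : Submodule k (Module.End k V ⊗[k] Module.End k V) :=
    Submodule.map ((TensorProduct.mk k (Module.End k V) (Module.End k V)).flip 1) S with hFAdef
  set FB : Submodule k (Module.End k V ⊗[k] Module.End k V) :=
    Submodule.map (TensorProduct.mk k (Module.End k V) (Module.End k V) 1) S with hFBdef
  set F2 : Submodule k (Module.End k V ⊗[k] Module.End k V) :=
    LinearMap.range (TensorProduct.map S.subtype S.subtype) with hF2def
  have hFAmem : ∀ s ∈ S, s ⊗ₜ[k] (1 : Module.End k V) ∈ FA := by
    intro s hs; exact ⟨s, hs, rfl⟩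
  have hFBmem : ∀ s ∈ S, (1 : Module.End k V) ⊗ₜ[k] s ∈ FB := by
    intro s hs; exact ⟨s, hs, rfl⟩
  have hF2mem : ∀ s ∈ S, ∀ t ∈ S, s ⊗ₜ[k] t ∈ F2 := by
    intro s hs t ht; exact ⟨(⟨s, hs⟩ : S) ⊗ₜ[k] (⟨t, ht⟩ : S), by simp⟩
  set Q0 := TensorProduct.map π π with hQ0def
  set QA := TensorProduct.map π' π with hQAdef
  set QB := TensorProduct.map π π' with hQBdef
  set Q2 := TensorProduct.map π' π' with hQ2def
  -- action of the Q's on the generators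
  have honFA : ∀ s ∈ S, Q0 (s ⊗ₜ[k] (1:Module.End k V)) = 0 ∧
      QA (s ⊗ₜ[k] (1:Module.End k V)) = s ⊗ₜ[k] 1 ∧
      QB (s ⊗ₜ[k] (1:Module.End k V)) = 0 ∧ Q2 (s ⊗ₜ[k] (1:Module.End k V)) = 0 := by
    intro s hs
    simp [hQ0def, hQAdef, hQBdef, hQ2def, hπS s hs, hπ'S s hs, hπ1, hπ'1]
  have honFB : ∀ s ∈ S, Q0 ((1:Module.End k V) ⊗ₜ[k] s) = 0 ∧
      QA ((1:Module.End k V) ⊗ₜ[k] s) = 0 ∧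
      QB ((1:Module.End k V) ⊗ₜ[k] s) = 1 ⊗ₜ[k] s ∧
      Q2 ((1:Module.End k V) ⊗ₜ[k] s) = 0 := by
    intro s hs
    simp [hQ0def, hQAdef, hQBdef, hQ2def, hπS s hs, hπ'S s hs, hπ1, hπ'1]
  have hon0 : Q0 ((1:Module.End k V) ⊗ₜ[k] (1:Module.End k V)) = 1 ⊗ₜ[k] 1 ∧
      QA ((1:Module.End k V) ⊗ₜ[k] (1:Module.End k V)) = 0 ∧
      QB ((1:Module.End k V) ⊗ₜ[k] (1:Module.End k V)) = 0 ∧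
      Q2 ((1:Module.End k V) ⊗ₜ[k] (1:Module.End k V)) = 0 := by
    simp [hQ0def, hQAdef, hQBdef, hQ2def, hπ1, hπ'1]
  have honF2 : ∀ z : (S : Submodule k (Module.End k V)) ⊗[k] S,
      Q0 (TensorProduct.map S.subtype S.subtype z) = 0 ∧
      QA (TensorProduct.map S.subtype S.subtype z) = 0 ∧
      QB (TensorProduct.map S.subtype S.subtype z) = 0 ∧
      Q2 (TensorProduct.map S.subtype S.subtype z) = TensorProduct.map S.subtype S.subtype z := by
    intro z
    induction z using TensorProduct.induction_on with
    | zero => simp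
    | tmul a b =>
      simp [hQ0def, hQAdef, hQBdef, hQ2def, hπS _ a.2, hπS _ b.2, hπ'S _ a.2, hπ'S _ b.2]
    | add x y hx hy =>
      obtain ⟨h1, h2, h3, h4⟩ := hx; obtain ⟨g1, g2, g3, g4⟩ := hy
      simp [map_add, h1, h2, h3, h4, g1, g2, g3, g4]
  -- membership of the images
  have hQ0mem : ∀ x, Q0 x ∈ F0 := by
    intro x
    induction x using TensorProduct.induction_on with
    | zero => simp
    | tmul f g =>
      rw [hQ0def, TensorProduct.map_tmul]
      simp only [hπapp f, hπapp g, TensorProduct.tmul_smul, ← TensorProduct.smul_tmul']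
      exact Submodule.smul_mem _ _ (Submodule.smul_mem _ _
        (Submodule.mem_span_singleton_self _))
    | add x y hx hy => rw [map_add]; exact Submodule.add_mem _ hx hy
  have hQAmem : ∀ x, QA x ∈ FA := by
    intro x
    induction x using TensorProduct.induction_on with
    | zero => simp
    | tmul f g =>
      rw [hQAdef, TensorProduct.map_tmul, hπapp g, TensorProduct.tmul_smul]
      exact Submodule.smul_mem _ _ (hFAmem _ (hπ'mem f))
    | add x y hx hy => rw [map_add]; exact Submodule.add_mem _ hx hy
  have hQBmem : ∀ x, QB x ∈ FB := by
    intro x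
    induction x using TensorProduct.induction_on with
    | zero => simp
    | tmul f g =>
      rw [hQBdef, TensorProduct.map_tmul]
      simp only [hπapp f, ← TensorProduct.smul_tmul']
      exact Submodule.smul_mem _ _ (hFBmem _ (hπ'mem g))
    | add x y hx hy => rw [map_add]; exact Submodule.add_mem _ hx hy
  have hQ2mem : ∀ x, Q2 x ∈ F2 := by
    intro x
    induction x using TensorProduct.induction_on with
    | zero => simp
    | tmul f g =>
      rw [hQ2def, TensorProduct.map_tmul]
      exact hF2mem _ (hπ'mem f) _ (hπ'mem g)
    | add x y hx hy => rw [map_add]; exact Submodule.add_mem _ hx hy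
  have hQsum : ∀ x, Q0 x + (QA x + QB x) + Q2 x = x := by
    intro x
    induction x using TensorProduct.induction_on with
    | zero => simp
    | tmul f g =>
      simp only [hQ0def, hQAdef, hQBdef, hQ2def, TensorProduct.map_tmul]
      have e1 : π f ⊗ₜ[k] π g + (π' f ⊗ₜ[k] π g + π f ⊗ₜ[k] π' g) + π' f ⊗ₜ[k] π' g
          = (π f + π' f) ⊗ₜ[k] (π g + π' g) := by
        rw [TensorProduct.add_tmul, TensorProduct.tmul_add, TensorProduct.tmul_add]
        abel
      rw [e1, hsum, hsum]
    | add x y hx hy =>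
      simp only [map_add]
      rw [show Q0 x + Q0 y + (QA x + QA y + (QB x + QB y)) + (Q2 x + Q2 y)
        = (Q0 x + (QA x + QB x) + Q2 x) + (Q0 y + (QA y + QB y) + Q2 y) from by abel, hx, hy]
  -- ==== stage 3: E, A, B and invariance ====
  set A : Submodule k (Module.End k U) := Submodule.map Ψ.toLinearMap FA with hAdef
  set B : Submodule k (Module.End k U) := Submodule.map Ψ.toLinearMap FB with hBdef
  set E : Fin 3 → Submodule k (Module.End k U) :=
    ![Submodule.map Ψ.toLinearMap F0, Submodule.map Ψ.toLinearMap (FA ⊔ FB),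
      Submodule.map Ψ.toLinearMap F2] with hEdef
  have hE0 : E 0 = Submodule.map Ψ.toLinearMap F0 := rfl
  have hE1 : E 1 = Submodule.map Ψ.toLinearMap (FA ⊔ FB) := rfl
  have hE2 : E 2 = Submodule.map Ψ.toLinearMap F2 := rfl
  have hE1eq : E 1 = A ⊔ B := by rw [hE1, Submodule.map_sup, hAdef, hBdef]
  have hvc : ∀ (x : ↥H) (v : V), (ρV x) ((ρV x⁻¹) v) = v := by
    intro x v
    have h1 : (ρV x) * (ρV x⁻¹) = 1 := by rw [← map_mul, mul_inv_cancel, map_one]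
    calc (ρV x) ((ρV x⁻¹) v) = ((ρV x) * (ρV x⁻¹)) v := rfl
      _ = v := by rw [h1]; rfl
  have hmid : ∀ y : ↥H, (ρV y) ∘ₗ (1 : Module.End k V) ∘ₗ (ρV y⁻¹) = 1 := by
    intro y; apply LinearMap.ext; intro v
    simp only [LinearMap.comp_apply, Module.End.one_apply]
    exact hvc y v
  have hconjS : ∀ (x : ↥H) (s : Module.End k V), s ∈ S →
      (ρV x) ∘ₗ s ∘ₗ (ρV x⁻¹) ∈ S := by
    intro x s hs
    rw [hSdef, LinearMap.mem_ker] at hs ⊢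
    have h1 : (ρV x) ∘ₗ s ∘ₗ (ρV x⁻¹) = (ρV x) * (s * ρV x⁻¹) := rfl
    rw [h1, LinearMap.trace_mul_comm, mul_assoc, ← map_mul, inv_mul_cancel, map_one,
      mul_one, hs]
  have hid1 : Ψ ((1 : Module.End k V) ⊗ₜ[k] (1 : Module.End k V)) = LinearMap.id := by
    apply LinearMap.ext; intro u
    apply T.injective
    rw [hΨap, TensorProduct.map_one]
    rfl
  have hE0span : E 0 = Submodule.span k {(LinearMap.id : Module.End k U)} := by
    rw [hE0, hF0def, Submodule.map_span, Set.image_singleton]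
    congr 1
    rw [show Ψ.toLinearMap ((1 : Module.End k V) ⊗ₜ[k] (1:Module.End k V))
      = Ψ ((1 : Module.End k V) ⊗ₜ[k] (1:Module.End k V)) from rfl, hid1]
  have hE0fix : ∀ (g : G), ∀ f ∈ E 0, (ρW g) ∘ₗ f ∘ₗ (ρW g⁻¹) = f := by
    intro g f hf
    rw [hE0span] at hf
    obtain ⟨c, rfl⟩ := Submodule.mem_span_singleton.mp hf
    apply LinearMap.ext; intro u
    simp only [LinearMap.comp_apply, LinearMap.smul_apply, LinearMap.id_apply, map_smul]
    rw [hcancel]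
  have hjAA : ∀ s ∈ S, Ψ (s ⊗ₜ[k] (1 : Module.End k V)) ∈ A := by
    intro s hs; exact ⟨s ⊗ₜ[k] 1, hFAmem s hs, rfl⟩
  have hjBB : ∀ s ∈ S, Ψ ((1 : Module.End k V) ⊗ₜ[k] s) ∈ B := by
    intro s hs; exact ⟨1 ⊗ₜ[k] s, hFBmem s hs, rfl⟩
  have hAelt : ∀ f ∈ A, ∃ s ∈ S, f = Ψ (s ⊗ₜ[k] (1 : Module.End k V)) := by
    intro f hf
    obtain ⟨x, hx, rfl⟩ := hf
    obtain ⟨s, hs, rfl⟩ := hx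
    exact ⟨s, hs, rfl⟩
  have hBelt : ∀ f ∈ B, ∃ s ∈ S, f = Ψ ((1 : Module.End k V) ⊗ₜ[k] s) := by
    intro f hf
    obtain ⟨x, hx, rfl⟩ := hf
    obtain ⟨s, hs, rfl⟩ := hx
    exact ⟨s, hs, rfl⟩
  have hAinv : ∀ (h : G), h ∈ H → ∀ f ∈ A, (ρW h) ∘ₗ f ∘ₗ (ρW h⁻¹) ∈ A := by
    intro h hh f hf
    obtain ⟨s, hs, rfl⟩ := hAelt f hf
    rw [hKh h hh s 1, hmid]
    exact hjAA _ (hconjS ⟨h, hh⟩ s hs)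
  have hBinv : ∀ (h : G), h ∈ H → ∀ f ∈ B, (ρW h) ∘ₗ f ∘ₗ (ρW h⁻¹) ∈ B := by
    intro h hh f hf
    obtain ⟨s, hs, rfl⟩ := hBelt f hf
    rw [hKh h hh 1 s, hmid]
    exact hjBB _ (hconjS ⟨σ⁻¹ * h * σ, hmemc hh⟩ s hs)
  have hmulap : ∀ (a b : G) (u : U), (ρW a) ((ρW b) u) = (ρW (a * b)) u := by
    intro a b u; rw [map_mul]; rfl
  have hsplit : ∀ (g : G) (f : Module.End k U),
      (ρW g) ∘ₗ f ∘ₗ (ρW g⁻¹) =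
        (ρW (g * σ⁻¹)) ∘ₗ ((ρW σ) ∘ₗ f ∘ₗ (ρW σ⁻¹)) ∘ₗ (ρW ((g * σ⁻¹)⁻¹)) := by
    intro g f
    apply LinearMap.ext; intro u
    simp only [LinearMap.comp_apply]
    rw [hmulap (g * σ⁻¹) σ, hmulap σ⁻¹ ((g * σ⁻¹)⁻¹)]
    have e1 : g * σ⁻¹ * σ = g := by group
    have e2 : σ⁻¹ * (g * σ⁻¹)⁻¹ = g⁻¹ := by group
    rw [e1, e2]
  have hgH : ∀ g ∉ H, g * σ⁻¹ ∈ H := by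
    intro g hg
    simp only [Subgroup.mul_mem_iff_of_index_two hH, Subgroup.inv_mem_iff]
    tauto
  have hABswap : ∀ g ∉ H, ∀ f ∈ A, (ρW g) ∘ₗ f ∘ₗ (ρW g⁻¹) ∈ B := by
    intro g hg f hf
    obtain ⟨s, hs, rfl⟩ := hAelt f hf
    rw [hsplit g, hKσ s 1, hmid ⟨σ ^ 2, hσ2⟩, hKh (g * σ⁻¹) (hgH g hg) 1 s,
      hmid ⟨g * σ⁻¹, hgH g hg⟩]
    exact hjBB _ (hconjS _ s hs)
  have hBAswap : ∀ g ∉ H, ∀ f ∈ B, (ρW g) ∘ₗ f ∘ₗ (ρW g⁻¹) ∈ A := by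
    intro g hg f hf
    obtain ⟨s, hs, rfl⟩ := hBelt f hf
    rw [hsplit g, hKσ 1 s, hKh (g * σ⁻¹) (hgH g hg) _ 1,
      hmid ⟨σ⁻¹ * (g * σ⁻¹) * σ, hmemc (hgH g hg)⟩]
    exact hjAA _ (hconjS _ _ (hconjS _ s hs))
  have hconj_add : ∀ (g : G) (f1 f2 : Module.End k U),
      (ρW g) ∘ₗ (f1 + f2) ∘ₗ (ρW g⁻¹) =
        ((ρW g) ∘ₗ f1 ∘ₗ (ρW g⁻¹)) + ((ρW g) ∘ₗ f2 ∘ₗ (ρW g⁻¹)) := by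
    intro g f1 f2; rw [LinearMap.add_comp, LinearMap.comp_add]
  have hE2conj : ∀ (g : G) (z : ↥S ⊗[k] ↥S),
      (ρW g) ∘ₗ (Ψ (TensorProduct.map S.subtype S.subtype z)) ∘ₗ (ρW g⁻¹) ∈ E 2 := by
    intro g z
    rw [hE2]
    induction z using TensorProduct.induction_on with
    | zero => simp only [map_zero, LinearMap.comp_zero, LinearMap.zero_comp]; exact zero_mem _
    | tmul a b =>
      rw [TensorProduct.map_tmul]
      by_cases hg : g ∈ H
      · rw [hKh g hg]
        exact ⟨_, hF2mem _ (hconjS ⟨g, hg⟩ _ a.2) _ (hconjS _ _ b.2), rfl⟩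
      · rw [hsplit g, hKσ, hKh (g * σ⁻¹) (hgH g hg)]
        exact ⟨_, hF2mem _ (hconjS _ _ (hconjS _ _ b.2)) _ (hconjS _ _ a.2), rfl⟩
    | add x y hx hy =>
      rw [map_add, map_add, hconj_add]
      exact add_mem hx hy
  have hinv : ∀ (i : Fin 3) (g : G), ∀ f ∈ E i, (ρW g) ∘ₗ f ∘ₗ (ρW g⁻¹) ∈ E i := by
    intro i g f hf
    fin_cases i
    · rw [hE0fix g f hf]; exact hf
    · rw [show (⟨1, by norm_num⟩ : Fin 3) = 1 from rfl] at hf ⊢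
      rw [hE1eq] at hf ⊢
      obtain ⟨fa, hfa, fb, hfb, rfl⟩ := Submodule.mem_sup.mp hf
      rw [hconj_add]
      by_cases hg : g ∈ H
      · exact add_mem (Submodule.mem_sup_left (hAinv g hg fa hfa))
          (Submodule.mem_sup_right (hBinv g hg fb hfb))
      · exact add_mem (Submodule.mem_sup_right (hABswap g hg fa hfa))
          (Submodule.mem_sup_left (hBAswap g hg fb hfb))
    · rw [show (⟨2, by norm_num⟩ : Fin 3) = 2 from rfl] at hf ⊢
      rw [hE2] at hf
      obtain ⟨x, hx, rfl⟩ := hf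
      rw [hF2def] at hx
      obtain ⟨z, rfl⟩ := hx
      exact hE2conj g z
  -- ==== stage 3b: sup and independence ====
  have hvalF0 : ∀ y ∈ F0, Q0 y = y ∧ QA y = 0 ∧ QB y = 0 ∧ Q2 y = 0 := by
    intro y hy
    rw [hF0def] at hy
    obtain ⟨c, rfl⟩ := Submodule.mem_span_singleton.mp hy
    obtain ⟨e1, e2, e3, e4⟩ := hon0
    simp [map_smul, e1, e2, e3, e4]
  have hvalFA : ∀ y ∈ FA, Q0 y = 0 ∧ QA y = y ∧ QB y = 0 ∧ Q2 y = 0 := by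
    intro y hy
    obtain ⟨s, hs, rfl⟩ := hy
    exact honFA s hs
  have hvalFB : ∀ y ∈ FB, Q0 y = 0 ∧ QA y = 0 ∧ QB y = y ∧ Q2 y = 0 := by
    intro y hy
    obtain ⟨s, hs, rfl⟩ := hy
    obtain ⟨e1, e2, e3, e4⟩ := honFB s hs
    exact ⟨e1, e2, e3, e4⟩
  have hvalF2 : ∀ y ∈ F2, Q0 y = 0 ∧ QA y = 0 ∧ QB y = 0 ∧ Q2 y = y := by
    intro y hy; rw [hF2def] at hy; obtain ⟨z, rfl⟩ := hy; exact honF2 z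
  have hvalF1 : ∀ y ∈ FA ⊔ FB, Q0 y = 0 ∧ QA y + QB y = y ∧ Q2 y = 0 := by
    intro y hy
    obtain ⟨ya, hya, yb, hyb, rfl⟩ := Submodule.mem_sup.mp hy
    obtain ⟨a1, a2, a3, a4⟩ := hvalFA ya hya
    obtain ⟨b1, b2, b3, b4⟩ := hvalFB yb hyb
    refine ⟨by rw [map_add, a1, b1, add_zero], ?_, by rw [map_add, a4, b4, add_zero]⟩
    rw [map_add, map_add, a2, a3, b2, b3]
    abel
  have hsupE : (⨆ i, E i) = ⊤ := by
    rw [eq_top_iff]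
    intro x _
    have hx : x = Ψ (Q0 (Ψ.symm x)) + Ψ (QA (Ψ.symm x) + QB (Ψ.symm x)) + Ψ (Q2 (Ψ.symm x)) := by
      rw [← map_add, ← map_add, hQsum, Ψ.apply_symm_apply]
    rw [hx]
    refine add_mem (add_mem ?_ ?_) ?_
    · exact Submodule.mem_iSup_of_mem 0 (by rw [hE0]; exact ⟨_, hQ0mem _, rfl⟩)
    · refine Submodule.mem_iSup_of_mem 1 (by
        rw [hE1]
        exact ⟨_, add_mem (Submodule.mem_sup_left (hQAmem _))
          (Submodule.mem_sup_right (hQBmem _)), rfl⟩)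
    · exact Submodule.mem_iSup_of_mem 2 (by rw [hE2]; exact ⟨_, hQ2mem _, rfl⟩)
  set L0 : Module.End k U →ₗ[k] Module.End k U :=
    Ψ.toLinearMap ∘ₗ Q0 ∘ₗ Ψ.symm.toLinearMap with hL0def
  set L1 : Module.End k U →ₗ[k] Module.End k U :=
    Ψ.toLinearMap ∘ₗ (QA + QB) ∘ₗ Ψ.symm.toLinearMap with hL1def
  set L2 : Module.End k U →ₗ[k] Module.End k U :=
    Ψ.toLinearMap ∘ₗ Q2 ∘ₗ Ψ.symm.toLinearMap with hL2def
  have hL0app : ∀ y, L0 (Ψ y) = Ψ (Q0 y) := by intro y; simp [hL0def]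
  have hL1app : ∀ y, L1 (Ψ y) = Ψ (QA y + QB y) := by intro y; simp [hL1def]
  have hL2app : ∀ y, L2 (Ψ y) = Ψ (Q2 y) := by intro y; simp [hL2def]
  have hindep : iSupIndep E := by
    intro i
    fin_cases i
    · apply Submodule.disjoint_def.mpr
      intro x hxi hxsup
      rw [show (⟨0, by norm_num⟩ : Fin 3) = 0 from rfl] at hxi hxsup
      have hub : (⨆ j, ⨆ (_ : j ≠ (0 : Fin 3)), E j) ≤ LinearMap.ker L0 := by
        apply iSup_le; intro j; apply iSup_le; intro hj
        fin_cases j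
        · exact absurd rfl hj
        · intro y hy
          rw [show (⟨1, by norm_num⟩ : Fin 3) = 1 from rfl, hE1] at hy
          obtain ⟨w, hw, rfl⟩ := hy
          rw [LinearMap.mem_ker, show Ψ.toLinearMap w = Ψ w from rfl, hL0app,
            (hvalF1 w hw).1, map_zero]
        · intro y hy
          rw [show (⟨2, by norm_num⟩ : Fin 3) = 2 from rfl, hE2] at hy
          obtain ⟨w, hw, rfl⟩ := hy
          rw [LinearMap.mem_ker, show Ψ.toLinearMap w = Ψ w from rfl, hL0app,
            (hvalF2 w hw).1, map_zero]
      have h1 : L0 x = 0 := LinearMap.mem_ker.mp (hub hxsup)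
      rw [hE0] at hxi
      obtain ⟨y, hy, rfl⟩ := hxi
      rw [show Ψ.toLinearMap y = Ψ y from rfl] at h1 ⊢
      rw [hL0app, (hvalF0 y hy).1] at h1
      exact h1
    · apply Submodule.disjoint_def.mpr
      intro x hxi hxsup
      rw [show (⟨1, by norm_num⟩ : Fin 3) = 1 from rfl] at hxi hxsup
      have hub : (⨆ j, ⨆ (_ : j ≠ (1 : Fin 3)), E j) ≤ LinearMap.ker L1 := by
        apply iSup_le; intro j; apply iSup_le; intro hj
        fin_cases j
        · intro y hy
          rw [show (⟨0, by norm_num⟩ : Fin 3) = 0 from rfl, hE0] at hy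
          obtain ⟨w, hw, rfl⟩ := hy
          obtain ⟨e1, e2, e3, e4⟩ := hvalF0 w hw
          rw [LinearMap.mem_ker, show Ψ.toLinearMap w = Ψ w from rfl, hL1app,
            e2, e3, add_zero, map_zero]
        · exact absurd rfl hj
        · intro y hy
          rw [show (⟨2, by norm_num⟩ : Fin 3) = 2 from rfl, hE2] at hy
          obtain ⟨w, hw, rfl⟩ := hy
          obtain ⟨e1, e2, e3, e4⟩ := hvalF2 w hw
          rw [LinearMap.mem_ker, show Ψ.toLinearMap w = Ψ w from rfl, hL1app,
            e2, e3, add_zero, map_zero]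
      have h1 : L1 x = 0 := LinearMap.mem_ker.mp (hub hxsup)
      rw [hE1] at hxi
      obtain ⟨y, hy, rfl⟩ := hxi
      rw [show Ψ.toLinearMap y = Ψ y from rfl] at h1 ⊢
      rw [hL1app, (hvalF1 y hy).2.1] at h1
      exact h1
    · apply Submodule.disjoint_def.mpr
      intro x hxi hxsup
      rw [show (⟨2, by norm_num⟩ : Fin 3) = 2 from rfl] at hxi hxsup
      have hub : (⨆ j, ⨆ (_ : j ≠ (2 : Fin 3)), E j) ≤ LinearMap.ker L2 := by
        apply iSup_le; intro j; apply iSup_le; intro hj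
        fin_cases j
        · intro y hy
          rw [show (⟨0, by norm_num⟩ : Fin 3) = 0 from rfl, hE0] at hy
          obtain ⟨w, hw, rfl⟩ := hy
          rw [LinearMap.mem_ker, show Ψ.toLinearMap w = Ψ w from rfl, hL2app,
            (hvalF0 w hw).2.2.2, map_zero]
        · intro y hy
          rw [show (⟨1, by norm_num⟩ : Fin 3) = 1 from rfl, hE1] at hy
          obtain ⟨w, hw, rfl⟩ := hy
          rw [LinearMap.mem_ker, show Ψ.toLinearMap w = Ψ w from rfl, hL2app,
            (hvalF1 w hw).2.2, map_zero]
        · exact absurd rfl hj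
      have h1 : L2 x = 0 := LinearMap.mem_ker.mp (hub hxsup)
      rw [hE2] at hxi
      obtain ⟨y, hy, rfl⟩ := hxi
      rw [show Ψ.toLinearMap y = Ψ y from rfl] at h1 ⊢
      rw [hL2app, (hvalF2 y hy).2.2.2] at h1
      exact h1
  -- ==== stage 3c: the equivalence e, dimensions, final clause ====
  set jA : ↥S →ₗ[k] Module.End k U :=
    Ψ.toLinearMap ∘ₗ ((TensorProduct.mk k (Module.End k V) (Module.End k V)).flip 1) ∘ₗ
      S.subtype with hjAdef
  have hjAapp : ∀ s : ↥S, jA s = Ψ ((s : Module.End k V) ⊗ₜ[k] 1) := fun s => rfl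
  set φ : Module.End k V →ₗ[k] k :=
    ((Module.finrank k V : k))⁻¹ • (LinearMap.trace k V) with hφdef
  have hφ1 : φ 1 = 1 := by
    simp [hφdef, LinearMap.trace_one]
    exact inv_mul_cancel₀ hnk
  have hφS : ∀ s ∈ S, φ s = 0 := by
    intro s hs
    rw [hSdef, LinearMap.mem_ker] at hs
    simp [hφdef, hs]
  set LA : Module.End k V ⊗[k] Module.End k V →ₗ[k] Module.End k V :=
    (TensorProduct.rid k (Module.End k V)).toLinearMap ∘ₗ
      (LinearMap.lTensor (Module.End k V) φ) with hLAdef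
  have hLAtm : ∀ f g : Module.End k V, LA (f ⊗ₜ[k] g) = (φ g) • f := by
    intro f g; simp [hLAdef]
  set LB : Module.End k V ⊗[k] Module.End k V →ₗ[k] Module.End k V :=
    (TensorProduct.lid k (Module.End k V)).toLinearMap ∘ₗ
      (LinearMap.rTensor (Module.End k V) φ) with hLBdef
  have hLBtm : ∀ f g : Module.End k V, LB (f ⊗ₜ[k] g) = (φ f) • g := by
    intro f g; simp [hLBdef]
  have hjAinj : Function.Injective jA := by
    intro s1 s2 h12
    rw [hjAapp, hjAapp] at h12
    have h2 := Ψ.injective h12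
    have h3 := congrArg LA h2
    rw [hLAtm, hLAtm, hφ1, one_smul, one_smul] at h3
    exact Subtype.ext h3
  have hranA : LinearMap.range jA = A := by
    rw [hAdef, hjAdef, LinearMap.range_comp, LinearMap.range_comp, Submodule.range_subtype]
  have hmemA : ∀ s : ↥S, jA s ∈ A := by
    intro s; rw [← hranA]; exact LinearMap.mem_range_self jA s
  set e : ↥A ≃ₗ[k] ↥(LinearMap.ker (LinearMap.trace k V)) :=
    (LinearEquiv.ofEq A (LinearMap.range jA) hranA.symm).trans
      (LinearEquiv.ofInjective jA hjAinj).symm with hedef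
  have heapp : ∀ (s : ↥S) (hmem : jA s ∈ A), e ⟨jA s, hmem⟩ = s := by
    intro s hmem
    have h2 : e.symm s = ⟨jA s, hmem⟩ := by
      apply Subtype.ext
      simp [hedef]
    rw [← h2, e.apply_symm_apply]
  have heequiv : ∀ (h : G) (hh : h ∈ H) (f : Module.End k U) (hf : f ∈ A),
      ∀ hmemconj : (ρW h) ∘ₗ f ∘ₗ (ρW h⁻¹) ∈ A,
      ((e ⟨(ρW h) ∘ₗ f ∘ₗ (ρW h⁻¹), hmemconj⟩ : Module.End k V)) =
        (ρV ⟨h, hh⟩) ∘ₗ ((e ⟨f, hf⟩ : Module.End k V)) ∘ₗ (ρV (⟨h, hh⟩⁻¹)) := by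
    intro h hh f hf hmemconj
    have hf' : f ∈ LinearMap.range jA := by rw [hranA]; exact hf
    obtain ⟨s, rfl⟩ := hf'
    have hconj : (ρW h) ∘ₗ jA s ∘ₗ (ρW h⁻¹) =
        jA ⟨(ρV ⟨h, hh⟩) ∘ₗ (s : Module.End k V) ∘ₗ (ρV (⟨h, hh⟩⁻¹)),
          hconjS ⟨h, hh⟩ _ s.2⟩ := by
      rw [hjAapp, hKh h hh _ 1, hmid, hjAapp]
    have h2 : (⟨(ρW h) ∘ₗ jA s ∘ₗ (ρW h⁻¹), hmemconj⟩ : ↥A) =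
        ⟨jA ⟨(ρV ⟨h, hh⟩) ∘ₗ (s : Module.End k V) ∘ₗ (ρV (⟨h, hh⟩⁻¹)),
          hconjS ⟨h, hh⟩ _ s.2⟩, hmemA _⟩ := Subtype.ext hconj
    rw [h2, heapp, heapp s hf]
  -- dimensions
  have hfrEnd : Module.finrank k (V →ₗ[k] V) =
      Module.finrank k V * Module.finrank k V :=
    Module.finrank_linearMap (R := k) (S := k) (M := V) (N := V)
  have htrsurj : LinearMap.range (LinearMap.trace k V) = ⊤ := by
    rw [LinearMap.range_eq_top]
    intro c
    refine ⟨(c * (Module.finrank k V : k)⁻¹) • 1, ?_⟩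
    rw [map_smul, LinearMap.trace_one, smul_eq_mul]
    field_simp
  have h4 : Module.finrank k V ^ 2 = Module.finrank k V * Module.finrank k V := sq _
  have hSdim : Module.finrank k ↥S = Module.finrank k V ^ 2 - 1 := by
    have h3 := LinearMap.finrank_range_add_finrank_ker (LinearMap.trace k V)
    rw [htrsurj, finrank_top, Module.finrank_self, hfrEnd, ← hSdef, ← h4] at h3
    have h5 : Module.finrank k ↥S + 1 = Module.finrank k V ^ 2 := by
      rw [Nat.add_comm]; exact h3
    exact Nat.eq_sub_of_add_eq h5
  have hAdim : Module.finrank k ↥A = Module.finrank k V ^ 2 - 1 := by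
    rw [e.finrank_eq]; exact hSdim
  set jB : ↥S →ₗ[k] Module.End k U :=
    Ψ.toLinearMap ∘ₗ (TensorProduct.mk k (Module.End k V) (Module.End k V) 1) ∘ₗ
      S.subtype with hjBdef
  have hjBapp : ∀ s : ↥S, jB s = Ψ ((1 : Module.End k V) ⊗ₜ[k] (s : Module.End k V)) :=
    fun s => rfl
  have hjBinj : Function.Injective jB := by
    intro s1 s2 h12
    rw [hjBapp, hjBapp] at h12
    have h3 := congrArg LB (Ψ.injective h12)
    rw [hLBtm, hLBtm, hφ1, one_smul, one_smul] at h3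
    exact Subtype.ext h3
  have hranB : LinearMap.range jB = B := by
    rw [hBdef, hjBdef, LinearMap.range_comp, LinearMap.range_comp, Submodule.range_subtype]
  have hBdim : Module.finrank k ↥B = Module.finrank k V ^ 2 - 1 := by
    rw [← hranB, ← (LinearEquiv.ofInjective jB hjBinj).finrank_eq]
    exact hSdim
  have hABbot : A ⊓ B = ⊥ := by
    rw [eq_bot_iff]
    rintro x ⟨hxA, hxB⟩
    obtain ⟨sa, hsa, rfl⟩ := hAelt x hxA
    obtain ⟨sb, hsb, heq⟩ := hBelt _ hxB
    have h2 := congrArg LA (Ψ.injective heq)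
    rw [hLAtm, hLAtm, hφ1, one_smul, hφS sb hsb, zero_smul] at h2
    simp [h2]
  have hE1dim : Module.finrank k ↥(E 1) = 2 * (Module.finrank k V ^ 2 - 1) := by
    have h5 := Submodule.finrank_sup_add_finrank_inf_eq A B
    rw [hABbot, finrank_bot, add_zero] at h5
    rw [hE1eq, h5, hAdim, hBdim]
    ring
  have hmapinj : Function.Injective (TensorProduct.map S.subtype S.subtype) := by
    have h6 : TensorProduct.map S.subtype S.subtype =
        (LinearMap.rTensor (Module.End k V) S.subtype) ∘ₗ
          (LinearMap.lTensor (↥S) S.subtype) := (LinearMap.rTensor_comp_lTensor (f := S.subtype) (g := S.subtype)).symm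
    rw [h6, LinearMap.coe_comp]
    exact (Module.Flat.rTensor_preserves_injective_linearMap _ S.injective_subtype).comp
      (Module.Flat.lTensor_preserves_injective_linearMap _ S.injective_subtype)
  have hE2dim : Module.finrank k ↥(E 2) = (Module.finrank k V ^ 2 - 1) ^ 2 := by
    have h7 : E 2 = LinearMap.range (Ψ.toLinearMap ∘ₗ TensorProduct.map S.subtype S.subtype) := by
      rw [hE2, hF2def, LinearMap.range_comp]
    have h8 : Function.Injective (Ψ.toLinearMap ∘ₗ TensorProduct.map S.subtype S.subtype) := by
      rw [LinearMap.coe_comp]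
      exact Ψ.injective.comp hmapinj
    rw [h7, LinearMap.finrank_range_of_inj h8, Module.finrank_tensorProduct, hSdim]
    exact (sq _).symm
  have hfinal : 1 < Module.finrank k V →
      ∀ g ∉ H, ∃ f : Module.End k U, (ρW g) ∘ₗ f ∘ₗ (ρW g⁻¹) ≠ f := by
    intro hn2 g hg
    have h5 : 2 ^ 2 ≤ Module.finrank k V ^ 2 := Nat.pow_le_pow_left hn2 2
    have hSpos : 0 < Module.finrank k ↥S := by rw [hSdim]; omega
    haveI : Nontrivial ↥S := Module.finrank_pos_iff.mp hSpos
    obtain ⟨s0, hs0⟩ := exists_ne (0 : ↥S)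
    refine ⟨jA s0, ?_⟩
    intro heq
    have hfB : jA s0 ∈ B := by
      rw [← heq]
      exact hABswap g hg _ (hmemA s0)
    have h9 : jA s0 ∈ A ⊓ B := ⟨hmemA s0, hfB⟩
    rw [hABbot, Submodule.mem_bot] at h9
    have h10 : jA s0 = jA 0 := by rw [h9, map_zero]
    exact hs0 (hjAinj h10)
  
  exact ⟨E, hindep, hsupE, hinv, hE0span, hE0fix,
    ⟨A, B, hE1eq.symm, hABbot, hAinv, hBinv, hABswap, hBAswap, e,
      fun h hh f hf => heequiv h hh f hf (hAinv h hh f hf)⟩,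
    hE1dim, hE2dim, hfinal⟩
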